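/- arXiv:2111.00384 — 2 statements merged into one kernel-verified Lean document; each statement's English description precedes it below -/
import Mathlib

section
/- Let p(X) be a monic real polynomial of degree d all of whose complex roots are real. Then the number of positive roots of p counted with multiplicity equals the number of sign changes (ignoring zeros) in the sequence of coefficients of p listed from the leading coefficient down to the constant term. -/
open Polynomial

/-- The number of sign changes of a finite sequence of real numbers: the number of
pairs of consecutive nonzero entries (after deleting all zero entries) having
opposite signs. -/
noncomputable def signChanges (l : List ℝ) : ℕ :=
  let l' := l.filter fun x => decide (x ≠ 0)
  (l'.zip l'.tail).countP fun p => decide (p.1 * p.2 < 0)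

/-- The coefficient sequence of a polynomial of degree `d`, listed from the leading
coefficient down to the constant term: `(coeff d, coeff (d-1), …, coeff 0)`. -/
noncomputable def coeffList (p : Polynomial ℝ) (d : ℕ) : List ℝ :=
  (List.range (d + 1)).map fun k => p.coeff (d - k)


/-- helper: counts adjacent pairs with negative product -/
noncomputable def ch : List ℝ → ℕ
  | [] => 0
  | a :: t => (match t with | [] => 0 | b :: _ => if a * b < 0 then 1 else 0) + ch t

@[simp] lemma ch_nil : ch [] = 0 := rfl
@[simp] lemma ch_single (a : ℝ) : ch [a] = 0 := rfl
lemma ch_cons_cons (a b : ℝ) (t : List ℝ) :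
    ch (a :: b :: t) = (if a * b < 0 then 1 else 0) + ch (b :: t) := rfl

noncomputable def sc (l : List ℝ) : ℕ := ch (l.filter fun x => decide (x ≠ 0))

lemma ch_eq_countP : ∀ m : List ℝ,
    (m.zip m.tail).countP (fun p => decide (p.1 * p.2 < 0)) = ch m
  | [] => rfl
  | [a] => rfl
  | a :: b :: t => by
    have := ch_eq_countP (b :: t)
    rw [ch_cons_cons]
    simp only [List.tail, List.zip_cons_cons, List.countP_cons] at *
    rw [this]
    simp only [decide_eq_true_eq]
    split <;> omega

lemma sc_cons_zero (l : List ℝ) : sc (0 :: l) = sc l := by simp [sc]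

lemma filter_cons_ne (y : ℝ) (hy : y ≠ 0) (l : List ℝ) :
    (y :: l).filter (fun x => decide (x ≠ 0)) = y :: l.filter (fun x => decide (x ≠ 0)) := by
  simp [List.filter_cons, hy]

lemma sc_cons_ne (x : ℝ) (hx : x ≠ 0) (l : List ℝ) :
    sc (x :: l) = ch (x :: l.filter fun x => decide (x ≠ 0)) := by
  simp [sc, List.filter_cons, hx]

lemma ch_cons_le (x : ℝ) (m : List ℝ) : ch (x :: m) ≤ 1 + ch m := by
  cases m with
  | nil => simp
  | cons b t => rw [ch_cons_cons]; split <;> omega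

lemma ch_le_cons (x : ℝ) (m : List ℝ) : ch m ≤ ch (x :: m) := by
  cases m with
  | nil => simp
  | cons b t => rw [ch_cons_cons]; omega

lemma sc_le_cons (x : ℝ) (l : List ℝ) : sc l ≤ sc (x :: l) := by
  by_cases hx : x = 0
  · simp [hx, sc_cons_zero]
  · rw [sc_cons_ne x hx]; exact ch_le_cons _ _

lemma sc_cons_le (x : ℝ) (l : List ℝ) : sc (x :: l) ≤ 1 + sc l := by
  by_cases hx : x = 0
  · simp [hx, sc_cons_zero]
  · rw [sc_cons_ne x hx]; exact ch_cons_le _ _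

lemma sign_trichotomy {x y z : ℝ} (hy : y ≠ 0) (h : x * z < 0) :
    x * y < 0 ∨ y * z < 0 := by
  by_contra hc
  push_neg at hc
  obtain ⟨h1, h2⟩ := hc
  nlinarith [mul_self_pos.2 hy]

lemma same_sign_prod {x y z : ℝ} (hxy : 0 < x * y) : x * z < 0 ↔ y * z < 0 := by
  rw [mul_neg_iff, mul_neg_iff]
  rcases mul_pos_iff.mp hxy with ⟨hx, hy⟩ | ⟨hx, hy⟩ <;>
    constructor <;> rintro (⟨h1, h2⟩ | ⟨h1, h2⟩) <;>
    first
      | (left; constructor <;> linarith)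
      | (right; constructor <;> linarith)
      | (exfalso; linarith)

lemma sc_head_same (x y : ℝ) (hx : x ≠ 0) (hy : y ≠ 0) (hxy : 0 < x * y) (l : List ℝ) :
    sc (x :: l) = sc (y :: l) := by
  rw [sc_cons_ne x hx, sc_cons_ne y hy]
  cases h : l.filter (fun x => decide (x ≠ 0)) with
  | nil => simp
  | cons z t =>
    rw [ch_cons_cons, ch_cons_cons]
    congr 1
    simp [same_sign_prod hxy]

lemma sc_cons_cons (x y : ℝ) (hx : x ≠ 0) (hy : y ≠ 0) (l : List ℝ) :
    sc (x :: y :: l) = (if x * y < 0 then 1 else 0) + sc (y :: l) := by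
  rw [sc_cons_ne x hx, sc_cons_ne y hy, filter_cons_ne y hy, ch_cons_cons]

lemma sc_tri (x y : ℝ) (hx : x ≠ 0) (hy : y ≠ 0) (l : List ℝ) :
    sc (x :: l) ≤ (if x * y < 0 then 1 else 0) + sc (y :: l) := by
  rw [sc_cons_ne x hx, sc_cons_ne y hy]
  cases h : l.filter (fun x => decide (x ≠ 0)) with
  | nil => simp
  | cons z t =>
    rw [ch_cons_cons, ch_cons_cons]
    by_cases hxz : x * z < 0
    · rw [if_pos hxz]
      rcases sign_trichotomy hy hxz with h1 | h2
      · rw [if_pos h1]; split <;> omega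
      · rw [if_pos h2]; split <;> omega
    · rw [if_neg hxz]; split <;> split <;> omega

lemma sc_allzero (c : ℝ) (m : List ℝ) (hm : ∀ y ∈ m, y = 0) : sc (c :: m) = 0 := by
  have hf : m.filter (fun x => decide (x ≠ 0)) = [] := by
    rw [List.filter_eq_nil_iff]; intro a ha; simpa using hm a ha
  by_cases hc : c = 0
  · rw [hc, sc_cons_zero]; unfold sc; rw [hf]; rfl
  · rw [sc_cons_ne c hc, hf]; simp

lemma sc_append_zero (l : List ℝ) : sc (l ++ [0]) = sc l := by
  simp [sc, List.filter_append]

lemma sc_middle_zero (c : ℝ) (l : List ℝ) : sc (c :: 0 :: l) = sc (c :: l) := by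
  unfold sc; simp [List.filter_cons]

/-- weighted running sums: `psum a c (x :: l) = (a*c+x) :: psum a (a*c+x) l` -/
noncomputable def psum (a : ℝ) : ℝ → List ℝ → List ℝ
  | _, [] => []
  | c, x :: l => (a * c + x) :: psum a (a * c + x) l

@[simp] lemma psum_nil (a c : ℝ) : psum a c [] = [] := rfl
@[simp] lemma psum_cons (a c x : ℝ) (l : List ℝ) :
    psum a c (x :: l) = (a * c + x) :: psum a (a * c + x) l := rfl

/-- Key lemma (discrete Rolle / Descartes step): if the weighted running sums of `r`
starting from `c` end at `0`, and are not identically zero, then the sign changes of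
`c :: r` exceed those of the running-sum sequence by at least one. -/
lemma key_lemma (a : ℝ) (ha : 0 < a) : ∀ (r : List ℝ) (c : ℝ),
    (c :: psum a c r).getLast? = some 0 →
    (c ≠ 0 ∨ ∃ x ∈ psum a c r, x ≠ 0) →
    sc (c :: psum a c r) + 1 ≤ sc (c :: r) := by
  intro r
  induction r with
  | nil =>
    intro c h0 hne
    simp only [psum_nil, List.getLast?_singleton, Option.some_inj] at h0
    simp [h0] at hne
  | cons x l IH =>
    intro c h0 hne
    rw [psum_cons] at h0 hne ⊢
    obtain ⟨c', hc'def⟩ : ∃ c', a * c + x = c' := ⟨_, rfl⟩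
    rw [hc'def] at h0 hne ⊢
    have h0' : (c' :: psum a c' l).getLast? = some 0 := by
      rwa [List.getLast?_cons_cons] at h0
    by_cases hc' : c' = 0
    · -- running sum hits zero now
      subst hc'
      have hx' : x = -(a * c) := by linarith
      by_cases hP : ∃ y ∈ psum a (0:ℝ) l, y ≠ 0
      · have IH' := IH 0 h0' (Or.inr hP)
        rw [sc_cons_zero, sc_cons_zero] at IH'
        by_cases hc : c = 0
        · have hx0 : x = 0 := by rw [hx', hc]; ring
          simp only [hc, hx0, sc_cons_zero]
          omega
        · have hx : x ≠ 0 := by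
            rw [hx']; intro h
            apply hc
            have : a * c = 0 := by linarith
            rcases mul_eq_zero.mp this with h' | h'
            · exact absurd h' (ne_of_gt ha)
            · exact h'
          have hcx : c * x < 0 := by
            rw [hx']; nlinarith [mul_self_pos.2 hc]
          rw [sc_cons_cons c x hc hx, if_pos hcx, sc_middle_zero]
          have h1 := sc_cons_le c (psum a (0:ℝ) l)
          have h2 := sc_le_cons x l
          omega
      · -- everything from here on is zero
        push_neg at hP
        have hc : c ≠ 0 := by
          rcases hne with h | ⟨y, hy, hyne⟩
          · exact h
          · rcases List.mem_cons.mp hy with rfl | hy'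
            · exact absurd rfl hyne
            · exact absurd (hP y hy') hyne
        have hx : x ≠ 0 := by
          rw [hx']; intro h
          apply hc
          have : a * c = 0 := by linarith
          rcases mul_eq_zero.mp this with h' | h'
          · exact absurd h' (ne_of_gt ha)
          · exact h'
        have hcx : c * x < 0 := by
          rw [hx']; nlinarith [mul_self_pos.2 hc]
        have hall : ∀ y ∈ (0:ℝ) :: psum a (0:ℝ) l, y = 0 := by
          intro y hy
          rcases List.mem_cons.mp hy with rfl | hy'
          · rfl
          · exact hP y hy'
        rw [sc_allzero c _ hall, sc_cons_cons c x hc hx, if_pos hcx]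
        omega
    · -- c' ≠ 0
      have IH' := IH c' h0' (Or.inl hc')
      by_cases hc : c = 0
      · have hxc' : x = c' := by rw [hc] at hc'def; linarith
        rw [hc, sc_cons_zero, sc_cons_zero, hxc']
        exact IH'
      · rw [sc_cons_cons c c' hc hc']
        by_cases hx : x = 0
        · -- c' = a*c, same sign as c
          have hcc' : 0 < c * c' := by
            rw [hx] at hc'def
            have h1 : c * c' = a * (c * c) := by rw [← hc'def]; ring
            rw [h1]; exact mul_pos ha (mul_self_pos.2 hc)
          rw [if_neg (by linarith), hx, sc_middle_zero]
          have heq : sc (c' :: l) = sc (c :: l) :=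
            sc_head_same c' c hc' hc (by nlinarith) l
          omega
        · rw [sc_cons_cons c x hc hx]
          by_cases hsame : 0 < x * c'
          · have heq : sc (c' :: l) = sc (x :: l) :=
              sc_head_same c' x hc' hx (by nlinarith) l
            have hiff : c * c' < 0 ↔ c * x < 0 := by
              rw [mul_comm c c', mul_comm c x]
              exact same_sign_prod (by nlinarith)
            by_cases h1 : c * c' < 0
            · rw [if_pos h1, if_pos (hiff.mp h1)]; omega
            · rw [if_neg h1, if_neg (fun h => h1 (hiff.mpr h))]; omega
          · -- x and c' have opposite signs
            have hxc' : x * c' < 0 := by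
              rcases (mul_ne_zero hx hc').lt_or_gt with h | h
              · exact h
              · exact absurd h (by simpa using hsame)
            have htri := sc_tri c' x hc' hx l
            rw [if_pos (by rwa [mul_comm] at hxc')] at htri
            have hcx : c * x < 0 ∧ ¬ (c * c' < 0) := by
              rcases mul_neg_iff.mp hxc' with ⟨hx1, hc1⟩ | ⟨hx1, hc1⟩
              · have hcneg : c < 0 := by nlinarith
                exact ⟨by nlinarith, by nlinarith⟩
              · have hcpos : 0 < c := by nlinarith
                exact ⟨by nlinarith, by nlinarith⟩
            rw [if_neg hcx.2, if_pos hcx.1]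
            omega


lemma psum_map_range (a : ℝ) :
    ∀ (m : ℕ) (f g : ℕ → ℝ) (c : ℝ), (g 0 = a * c + f 0) →
    (∀ i, i + 1 < m + 1 → g (i + 1) = a * g i + f (i + 1)) →
    psum a c ((List.range (m + 1)).map f) = (List.range (m + 1)).map g := by
  intro m
  induction m with
  | zero =>
    intro f g c h0 _
    rw [show List.range 1 = [0] from rfl]
    simp [h0]
  | succ k IH =>
    intro f g c h0 hrec
    rw [show List.range (k + 1 + 1) = 0 :: List.map Nat.succ (List.range (k + 1)) from
      List.range_succ_eq_map]
    simp only [List.map_cons, psum_cons, List.map_map]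
    rw [← h0]
    congr 1
    exact IH (f ∘ Nat.succ) (g ∘ Nat.succ) (g 0)
      (by simpa using hrec 0 (by omega))
      (fun i hi => by simpa using hrec (i + 1) (by omega))

lemma sc_mul_X_sub_C (q : Polynomial ℝ) (hq : q ≠ 0) (a : ℝ) (ha : 0 < a) :
    sc (coeffList q q.natDegree) + 1 ≤
      sc (coeffList ((X - C a) * q) (q.natDegree + 1)) := by
  obtain ⟨n, hn⟩ : ∃ n, q.natDegree = n := ⟨_, rfl⟩
  rw [hn]
  have hXa : (X - C a : Polynomial ℝ) ≠ 0 := (monic_X_sub_C a).ne_zero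
  have hrne : (X - C a) * q ≠ 0 := mul_ne_zero hXa hq
  have hrdeg : ((X - C a) * q).natDegree = n + 1 := by
    rw [natDegree_mul hXa hq, natDegree_X_sub_C, hn, add_comm]
  have hrc : ∀ j, ((X - C a) * q).coeff j = (X * q).coeff j - a * q.coeff j := by
    intro j
    rw [show (X - C a) * q = X * q - C a * q by ring]
    simp [coeff_sub, coeff_C_mul]
  have hlead : ((X - C a) * q).coeff (n + 1) = q.coeff n := by
    have h1 : ((X - C a) * q).coeff (n + 1) = ((X - C a) * q).leadingCoeff := by
      rw [leadingCoeff, hrdeg]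
    rw [h1, leadingCoeff_mul, leadingCoeff_X_sub_C, one_mul, leadingCoeff, hn]
  have hg0 : (if 0 ≤ n then q.coeff (n - 0) else 0) =
      a * 0 + ((X - C a) * q).coeff (n + 1 - 0) := by
    simp [hlead]
  have hgrec : ∀ i, i + 1 < (n + 1) + 1 →
      (if i + 1 ≤ n then q.coeff (n - (i + 1)) else 0) =
      a * (if i ≤ n then q.coeff (n - i) else 0) + ((X - C a) * q).coeff (n + 1 - (i + 1)) := by
    intro i hi
    have hi' : i ≤ n := by omega
    rw [if_pos hi']
    have hidx : n + 1 - (i + 1) = n - i := by omega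
    rw [hidx, hrc (n - i)]
    by_cases hin : i = n
    · subst hin
      rw [if_neg (by omega)]
      have h0 : i - i = 0 := by omega
      rw [h0]
      have hX0 : (X * q).coeff 0 = 0 := by
        rw [mul_coeff_zero, coeff_X_zero, zero_mul]
      rw [hX0]; ring
    · rw [if_pos (by omega)]
      obtain ⟨k, hk⟩ : ∃ k, n - i = k + 1 := ⟨n - i - 1, by omega⟩
      rw [hk, coeff_X_mul]
      have : n - (i + 1) = k := by omega
      rw [this]; ring
  have hpsum : psum a 0 ((List.range ((n + 1) + 1)).map (fun j => ((X - C a) * q).coeff (n + 1 - j)))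
      = (List.range ((n + 1) + 1)).map (fun j => if j ≤ n then q.coeff (n - j) else 0) :=
    psum_map_range a (n + 1) _ _ 0 hg0 hgrec
  have hlist : (List.range ((n + 1) + 1)).map (fun j => if j ≤ n then q.coeff (n - j) else 0)
      = coeffList q n ++ [0] := by
    rw [List.range_succ, List.map_append]
    congr 1
    · unfold _root_.coeffList
      apply List.map_congr_left
      intro j hj
      rw [List.mem_range] at hj
      rw [if_pos (by omega)]
    · simp
  have hlast : ((0:ℝ) :: psum a 0 ((List.range ((n + 1) + 1)).map
      (fun j => ((X - C a) * q).coeff (n + 1 - j)))).getLast? = some 0 := by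
    rw [hpsum, hlist]
    rw [show (0:ℝ) :: (coeffList q n ++ [0]) = ((0 :: coeffList q n) ++ [0]) from rfl]
    exact List.getLast?_concat
  have hne : (0:ℝ) ≠ 0 ∨ ∃ x ∈ psum a 0 ((List.range ((n + 1) + 1)).map
      (fun j => ((X - C a) * q).coeff (n + 1 - j))), x ≠ 0 := by
    right
    refine ⟨q.coeff n, ?_, ?_⟩
    · rw [hpsum]
      exact List.mem_map.mpr ⟨0, by simp [List.mem_range], by simp⟩
    · rw [← hn]
      exact Polynomial.leadingCoeff_ne_zero.mpr hq
  have hkey := key_lemma a ha _ 0 hlast hne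
  rw [sc_cons_zero, sc_cons_zero, hpsum, hlist, sc_append_zero] at hkey
  exact hkey

/-- sign changes of the coefficient list of a polynomial -/
noncomputable def VP (p : Polynomial ℝ) : ℕ := sc (coeffList p p.natDegree)

lemma VP_mul_X_sub_C (q : Polynomial ℝ) (hq : q ≠ 0) (a : ℝ) (ha : 0 < a) :
    VP q + 1 ≤ VP ((X - C a) * q) := by
  unfold VP
  have hXa : (X - C a : Polynomial ℝ) ≠ 0 := (monic_X_sub_C a).ne_zero
  have hd : ((X - C a) * q).natDegree = q.natDegree + 1 := by
    rw [natDegree_mul hXa hq, natDegree_X_sub_C, add_comm]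
  rw [hd]
  exact sc_mul_X_sub_C q hq a ha

lemma card_le_VP : ∀ s : Multiset ℝ, (∀ x ∈ s, 0 < x) → ∀ q : Polynomial ℝ, q ≠ 0 →
    Multiset.card s ≤ VP (q * (s.map (fun x => X - C x)).prod) := by
  intro s
  induction s using Multiset.induction_on with
  | empty => intro _ q hq; simp
  | cons a s IH =>
    intro hpos q hq
    have ha : 0 < a := hpos a (Multiset.mem_cons_self a s)
    have hs : ∀ x ∈ s, 0 < x := fun x hx => hpos x (Multiset.mem_cons_of_mem hx)
    have hprodne : (s.map (fun x => X - C x)).prod ≠ 0 := by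
      apply (monic_multiset_prod_of_monic s _ (fun x _ => monic_X_sub_C x)).ne_zero
    rw [Multiset.map_cons, Multiset.prod_cons,
      show q * ((X - C a) * (s.map (fun x => X - C x)).prod) =
        (X - C a) * (q * (s.map (fun x => X - C x)).prod) by ring]
    have h1 := VP_mul_X_sub_C (q * (s.map (fun x => X - C x)).prod)
      (mul_ne_zero hq hprodne) a ha
    have h2 := IH hs q hq
    rw [Multiset.card_cons]
    omega

/-- flip the signs of the entries in odd positions -/
noncomputable def altSign : List ℝ → List ℝ
  | [] => []
  | x :: l => x :: (altSign l).map (fun y => -y)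

@[simp] lemma altSign_nil : altSign [] = [] := rfl
@[simp] lemma altSign_cons (x : ℝ) (l : List ℝ) :
    altSign (x :: l) = x :: (altSign l).map (fun y => -y) := rfl

/-- one plus the index of the last nonzero entry (0 if none) -/
noncomputable def Nlast : List ℝ → ℕ
  | [] => 0
  | a :: l => if Nlast l = 0 then (if a = 0 then 0 else 1) else Nlast l + 1

@[simp] lemma Nlast_nil : Nlast [] = 0 := rfl
lemma Nlast_cons (a : ℝ) (l : List ℝ) :
    Nlast (a :: l) = if Nlast l = 0 then (if a = 0 then 0 else 1) else Nlast l + 1 := rfl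

lemma Nlast_allzero : ∀ l : List ℝ, (∀ x ∈ l, x = 0) → Nlast l = 0 := by
  intro l
  induction l with
  | nil => intro _; rfl
  | cons a t IH =>
    intro h
    rw [Nlast_cons, IH (fun x hx => h x (List.mem_cons_of_mem a hx)), if_pos rfl,
      if_pos (h a (List.mem_cons_self))]

lemma Nlast_eq_zero : ∀ l : List ℝ, Nlast l = 0 → ∀ x ∈ l, x = 0 := by
  intro l
  induction l with
  | nil => intro _ x hx; simp at hx
  | cons a t IH =>
    intro h x hx
    rw [Nlast_cons] at h
    by_cases hN : Nlast t = 0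
    · rw [if_pos hN] at h
      rcases List.mem_cons.mp hx with rfl | hx'
      · by_contra hne; rw [if_neg hne] at h; omega
      · exact IH hN x hx'
    · rw [if_neg hN] at h; omega

lemma ch_map_neg : ∀ m : List ℝ, ch (m.map (fun y => -y)) = ch m := by
  intro m
  induction m with
  | nil => rfl
  | cons a t IH =>
    cases t with
    | nil => rfl
    | cons b t' =>
      simp only [List.map_cons] at *
      rw [ch_cons_cons, ch_cons_cons, IH]
      congr 1
      rw [show -a * -b = a * b by ring]

lemma sc_map_neg (l : List ℝ) : sc (l.map (fun y => -y)) = sc l := by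
  unfold sc
  rw [List.filter_map]
  have : (fun x => decide (x ≠ 0)) ∘ (fun y : ℝ => -y) = (fun x => decide (x ≠ 0)) := by
    funext x; simp
  rw [this, ch_map_neg]

lemma sc_cons_map_neg (y : ℝ) (l : List ℝ) : sc (y :: l.map (fun y => -y)) = sc (-y :: l) := by
  have : (-y :: l).map (fun y : ℝ => -y) = y :: l.map (fun y : ℝ => -y) := by
    simp
  rw [← this, sc_map_neg]

lemma altSign_allzero : ∀ l : List ℝ, (∀ x ∈ l, x = 0) → ∀ y ∈ altSign l, y = 0 := by
  intro l
  induction l with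
  | nil => intro _ y hy; simp at hy
  | cons a t IH =>
    intro h y hy
    rw [altSign_cons] at hy
    rcases List.mem_cons.mp hy with h' | hy'
    · rw [h']; exact h _ (List.mem_cons_self)
    · obtain ⟨z, hz, hzy⟩ := List.mem_map.mp hy'
      rw [← hzy, IH (fun x hx => h x (List.mem_cons_of_mem _ hx)) z hz, neg_zero]

lemma prod_sign_both {x y a : ℝ} (h1 : x * a < 0) (h2 : y * a < 0) : ¬ x * y < 0 := by
  intro h3
  nlinarith [mul_pos_of_neg_of_neg h1 h2, mul_self_nonneg a]

lemma sc_single (x : ℝ) : sc [x] = 0 := sc_allzero x [] (by simp)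

/-- Key opposing bound: sign changes of a list plus sign changes of its alternation
are bounded by the position of the last nonzero entry. -/
lemma alt_bound : ∀ (A : List ℝ) (x y : ℝ), x ≠ 0 → y ≠ 0 →
    sc (x :: A) + sc (y :: altSign A) ≤ Nlast A + (if x * y < 0 then 0 else 1) := by
  intro A
  induction A with
  | nil =>
    intro x y hx hy
    rw [altSign_nil, sc_single, sc_single]
    omega
  | cons a A' IH =>
    intro x y hx hy
    rw [altSign_cons]
    by_cases ha : a = 0
    · subst ha
      rw [sc_middle_zero, sc_middle_zero, sc_cons_map_neg]
      have IH' := IH x (-y) hx (neg_ne_zero.mpr hy)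
      by_cases hN : Nlast A' = 0
      · have hz := Nlast_eq_zero A' hN
        rw [sc_allzero x A' hz, sc_allzero (-y) _ (altSign_allzero A' hz)]
        omega
      · rw [Nlast_cons, if_neg hN]
        have h1 : (if x * -y < 0 then (0:ℕ) else 1) ≤ 1 := by split <;> omega
        have h2 : (0:ℕ) ≤ (if x * y < 0 then (0:ℕ) else 1) := by omega
        linarith [IH']
    · rw [sc_cons_cons x a hx ha, sc_cons_cons y a hy ha, sc_cons_map_neg]
      have IH' := IH a (-a) ha (neg_ne_zero.mpr ha)
      rw [if_pos (by nlinarith [mul_self_pos.2 ha] : a * -a < 0)] at IH'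
      have hite : (if x * a < 0 then (1:ℕ) else 0) + (if y * a < 0 then (1:ℕ) else 0)
          ≤ 1 + (if x * y < 0 then (0:ℕ) else 1) := by
        by_cases h1 : x * a < 0
        · by_cases h2 : y * a < 0
          · rw [if_pos h1, if_pos h2, if_neg (prod_sign_both h1 h2)]
          · rw [if_pos h1, if_neg h2]; split <;> omega
        · rw [if_neg h1]
          have hy1 : (if y * a < 0 then (1:ℕ) else 0) ≤ 1 := by split <;> omega
          have hy2 : (0:ℕ) ≤ (if x * y < 0 then (0:ℕ) else 1) := by omega
          linarith
      rw [Nlast_cons, if_neg ha]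
      by_cases hN : Nlast A' = 0
      · rw [if_pos hN]
        linarith [IH', hite, hN.le]
      · rw [if_neg hN]
        linarith [IH', hite]

lemma coeff_comp_neg : ∀ (p : Polynomial ℝ) (i : ℕ),
    (p.comp (-X)).coeff i = (-1)^i * p.coeff i := by
  intro p
  induction p using Polynomial.induction_on' with
  | add p q hp hq =>
    intro i
    simp only [add_comp, coeff_add, hp i, hq i]
    ring
  | monomial n a =>
    intro i
    rw [← C_mul_X_pow_eq_monomial, mul_comp, C_comp, X_pow_comp]
    have hneg : (-X : Polynomial ℝ)^n = C ((-1)^n) * X^n := by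
      rw [neg_pow]
      simp [map_pow]
    rw [hneg, ← mul_assoc, ← C_mul, coeff_C_mul, coeff_X_pow, coeff_C_mul, coeff_X_pow]
    by_cases h : i = n
    · subst h; simp; ring
    · simp [Ne.symm h, h]

lemma altSign_map_range : ∀ (m : ℕ) (f : ℕ → ℝ),
    altSign ((List.range m).map f) = (List.range m).map (fun j => (-1:ℝ)^j * f j) := by
  intro m
  induction m with
  | zero => intro f; rfl
  | succ k IH =>
    intro f
    rw [show List.range (k + 1) = 0 :: List.map Nat.succ (List.range k) from
      List.range_succ_eq_map]
    simp only [List.map_cons, altSign_cons, List.map_map]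
    congr 1
    · simp
    · rw [IH (f ∘ Nat.succ), List.map_map]
      apply List.map_congr_left
      intro j _
      simp only [Function.comp_apply, Nat.succ_eq_add_one]
      rw [pow_succ]
      ring

lemma Nlast_concat (z : ℝ) : ∀ l : List ℝ,
    Nlast (l ++ [z]) = if z = 0 then Nlast l else l.length + 1 := by
  intro l
  induction l with
  | nil =>
    rw [List.nil_append, Nlast_cons, Nlast_nil, if_pos rfl]
    split <;> simp_all
  | cons a t IH =>
    rw [List.cons_append, Nlast_cons, IH, Nlast_cons]
    by_cases hz : z = 0
    · rw [if_pos hz, if_pos hz]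
    · rw [if_neg hz, if_neg hz, if_neg (by simp : ¬ t.length + 1 = 0)]
      simp

lemma Nlast_map_range : ∀ (m : ℕ) (f : ℕ → ℝ) (t : ℕ), t < m → f t ≠ 0 →
    (∀ i, t < i → i < m → f i = 0) →
    Nlast ((List.range m).map f) = t + 1 := by
  intro m
  induction m with
  | zero => intro f t ht _ _; omega
  | succ k IH =>
    intro f t ht hft hzero
    rw [List.range_succ, List.map_append, List.map_cons, List.map_nil, Nlast_concat]
    by_cases htk : t = k
    · subst htk
      rw [if_neg hft]
      simp
    · rw [if_pos (hzero k (by omega) (by omega))]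
      exact IH f t (by omega) hft (fun i h1 h2 => hzero i h1 (by omega))

lemma ntd_prod : ∀ R : Multiset ℝ,
    ((R.map (fun r => X - C r)).prod).natTrailingDegree = (R.filter (fun x => x = 0)).card := by
  intro R
  induction R using Multiset.induction_on with
  | empty => simp
  | cons a R IH =>
    rw [Multiset.map_cons, Multiset.prod_cons, Polynomial.natTrailingDegree_mul
      (monic_X_sub_C a).ne_zero
      (monic_multiset_prod_of_monic R _ (fun x _ => monic_X_sub_C x)).ne_zero, IH,
      Multiset.filter_cons]
    by_cases ha : a = 0
    · subst ha
      rw [show (X - C (0:ℝ)) = X by simp, natTrailingDegree_X]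
      simp [add_comm]
    · have h0 : (X - C a).natTrailingDegree = 0 := by
        rw [Polynomial.natTrailingDegree_eq_zero]
        right
        simp [ha]
      rw [h0]
      simp [ha]

lemma posCard_le_VP (T : Multiset ℝ) :
    (T.filter (fun x => 0 < x)).card ≤ VP ((T.map (fun x => X - C x)).prod) := by
  classical
  have hsplit := Multiset.filter_add_not (fun x => 0 < x) T
  have hprod : (T.map (fun x => X - C x)).prod =
      ((T.filter (fun x => ¬ 0 < x)).map (fun x => X - C x)).prod *
      ((T.filter (fun x => 0 < x)).map (fun x => X - C x)).prod := by
    conv_lhs => rw [← hsplit]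
    rw [Multiset.map_add, Multiset.prod_add, mul_comm]
  rw [hprod]
  exact card_le_VP _ (fun x hx => (Multiset.mem_filter.mp hx).2) _
    (monic_multiset_prod_of_monic _ _ (fun x _ => monic_X_sub_C x)).ne_zero


lemma signChanges_eq_sc (l : List ℝ) : signChanges l = sc l := by
  unfold signChanges sc
  exact ch_eq_countP _

/-- **Descartes' rule of signs (case of equality).** Let `p` be a monic real polynomial
of degree `d` all of whose complex roots are real. Then the number of positive roots
of `p` counted with multiplicity equals the number of sign changes in the sequence of
coefficients of `p` listed from the leading coefficient down to the constant term. -/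
theorem descartes_rule_of_signs_real_rooted (p : Polynomial ℝ) (d : ℕ)
    (hmonic : p.Monic) (hdeg : p.natDegree = d)
    (hreal : ∀ z ∈ (p.map (algebraMap ℝ ℂ)).roots, z.im = 0) :
    (p.roots.filter fun x => 0 < x).card = signChanges (coeffList p d) := by
  classical
  have hp0 : p ≠ 0 := hmonic.ne_zero
  -- construct the multiset of real roots
  have hpCmonic : (p.map (algebraMap ℝ ℂ)).Monic := hmonic.map _
  have hsplits : Splits (p.map (algebraMap ℝ ℂ)) :=
    IsAlgClosed.splits _
  have heq := hsplits.eq_prod_roots_of_monic hpCmonic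
  obtain ⟨R, hR⟩ : ∃ R : Multiset ℝ, R = (p.map (algebraMap ℝ ℂ)).roots.map Complex.re :=
    ⟨_, rfl⟩
  have hcard : Multiset.card R = d := by
    rw [hR, Multiset.card_map, (splits_iff_card_roots).mp hsplits,
      hmonic.natDegree_map, hdeg]
  have hp : p = (R.map (fun x => X - C x)).prod := by
    apply Polynomial.map_injective (algebraMap ℝ ℂ) (algebraMap ℝ ℂ).injective
    rw [Polynomial.map_multiset_prod, Multiset.map_map, heq]
    rw [hR, Multiset.map_map]
    congr 1
    apply Multiset.map_congr rfl
    intro z hz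
    have hz' : ((algebraMap ℝ ℂ)) z.re = z := by
      apply Complex.ext <;> simp [hreal z hz]
    simp only [Function.comp_apply, Polynomial.map_sub, map_X, map_C, hz']
  have hroots : p.roots = R := by rw [hp, roots_multiset_prod_X_sub_C]
  -- the reflected polynomial Q
  obtain ⟨Q, hQ⟩ : ∃ Q : Polynomial ℝ,
      Q = (((R.map (fun r => -r)).map (fun x => X - C x)).prod) := ⟨_, rfl⟩
  have hQdeg : Q.natDegree = d := by
    rw [hQ, natDegree_multiset_prod_X_sub_C_eq_card, Multiset.card_map, hcard]
  -- Q's coefficients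
  have hcomp : p.comp (-X) = ((-1 : Polynomial ℝ)^d) * Q := by
    conv_lhs => rw [hp]
    rw [multiset_prod_comp, Multiset.map_map]
    have h1 : R.map ((fun q => q.comp (-X)) ∘ (fun x : ℝ => X - C x)) =
        R.map (fun r => -(X - C (-r))) := by
      apply Multiset.map_congr rfl
      intro r _
      simp only [Function.comp_apply, sub_comp, X_comp, C_comp, map_neg]
      ring
    rw [h1, show R.map (fun r : ℝ => -(X - C (-r))) =
        (R.map (fun r : ℝ => X - C (-r))).map Neg.neg by rw [Multiset.map_map]; rfl,
      Multiset.prod_map_neg, Multiset.card_map, hcard]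
    congr 1
    rw [hQ, Multiset.map_map]
    rfl
  have hQcoeff : ∀ i, Q.coeff i = (-1:ℝ)^(d + i) * p.coeff i := by
    intro i
    have h2 : ((-1 : Polynomial ℝ)^d) * ((-1 : Polynomial ℝ)^d) = 1 := by
      rw [← pow_add]
      exact Even.neg_one_pow ⟨d, by ring⟩
    have h3 : Q = ((-1 : Polynomial ℝ)^d) * p.comp (-X) := by
      rw [hcomp, ← mul_assoc, h2, one_mul]
    have hC : ((-1 : Polynomial ℝ)^d) = C ((-1:ℝ)^d) := by
      simp [map_pow]
    rw [h3, hC, coeff_C_mul, coeff_comp_neg, pow_add]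
    ring
  -- coefficient lists
  have hclQ : coeffList Q d = altSign (coeffList p d) := by
    unfold _root_.coeffList
    rw [altSign_map_range]
    apply List.map_congr_left
    intro j hj
    rw [List.mem_range] at hj
    rw [hQcoeff (d - j)]
    have hpar : (-1:ℝ)^(d + (d - j)) = (-1:ℝ)^j := by
      have he : d + (d - j) = j + 2*(d - j) := by omega
      rw [he, pow_add, pow_mul, neg_one_sq, one_pow, mul_one]
    rw [hpar]
  -- lower bounds
  have hm : (R.filter (fun x => 0 < x)).card ≤ VP p := by
    have := posCard_le_VP R
    rwa [← hp] at this
  have hn : (R.filter (fun x => x < 0)).card ≤ VP Q := by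
    have h1 := posCard_le_VP (R.map (fun r => -r))
    rw [← hQ] at h1
    have hcnt : ((R.map (fun r => -r)).filter (fun x => 0 < x)).card =
        (R.filter (fun x => x < 0)).card := by
      rw [Multiset.filter_map, Multiset.card_map]
      congr 1
      apply Multiset.filter_congr
      intro x _
      simp [Function.comp_apply, neg_pos]
    rwa [hcnt] at h1
  -- trailing degree
  have hk : p.natTrailingDegree = (R.filter (fun x => x = 0)).card := by
    have := ntd_prod R
    rwa [← hp] at this
  have hlead : p.coeff d = 1 := by rw [← hdeg]; exact hmonic.coeff_natDegree
  have hsplitlist : coeffList p d =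
      1 :: (List.range d).map (fun j => p.coeff (d - (j+1))) := by
    unfold _root_.coeffList
    rw [show List.range (d+1) = 0 :: List.map Nat.succ (List.range d) from
      List.range_succ_eq_map, List.map_cons, List.map_map]
    congr 1
  have haltQ : sc (coeffList Q d) =
      sc ((-1) :: altSign ((List.range d).map (fun j => p.coeff (d - (j+1))))) := by
    rw [hclQ, hsplitlist, altSign_cons]
    exact sc_cons_map_neg 1 _
  -- upper bound
  have hub : sc (coeffList p d) + sc (coeffList Q d) ≤
      d - (R.filter (fun x => x = 0)).card := by
    rw [haltQ]
    conv_lhs => rw [hsplitlist]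
    have hb := alt_bound ((List.range d).map (fun j => p.coeff (d - (j+1)))) 1 (-1)
      one_ne_zero (by norm_num)
    rw [if_pos (by norm_num : (1:ℝ) * (-1) < 0)] at hb
    have hNA : Nlast ((List.range d).map (fun j => p.coeff (d - (j+1)))) =
        d - (R.filter (fun x => x = 0)).card := by
      by_cases hkd : p.natTrailingDegree = d
      · have hz : ∀ x ∈ (List.range d).map (fun j => p.coeff (d - (j+1))), x = 0 := by
          intro x hx
          obtain ⟨j, hj, rfl⟩ := List.mem_map.mp hx
          rw [List.mem_range] at hj
          apply coeff_eq_zero_of_lt_natTrailingDegree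
          omega
        rw [Nlast_allzero _ hz]
        omega
      · have hle : p.natTrailingDegree ≤ d := by
          rw [← hdeg]; exact natTrailingDegree_le_natDegree p
        have hklt : p.natTrailingDegree < d := lt_of_le_of_ne hle hkd
        rw [Nlast_map_range d _ (d - 1 - p.natTrailingDegree) (by omega)
          (by
            have hidx : d - (d - 1 - p.natTrailingDegree + 1) = p.natTrailingDegree := by
              omega
            rw [hidx]
            exact Polynomial.trailingCoeff_nonzero_iff_nonzero.mpr hp0)
          (by
            intro i h1 h2
            apply coeff_eq_zero_of_lt_natTrailingDegree
            omega)]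
        omega
    rw [hNA] at hb
    omega
  -- counting
  have hcount : (R.filter (fun x => 0 < x)).card + (R.filter (fun x => x < 0)).card
      + (R.filter (fun x => x = 0)).card = d := by
    have h1 := Multiset.filter_add_not (fun x => 0 < x) R
    have h2 := Multiset.filter_add_not (fun x => x < 0) (R.filter (fun x => ¬ 0 < x))
    have hc1 : (R.filter (fun x => 0 < x)).card + (R.filter (fun x => ¬ 0 < x)).card = d := by
      rw [← Multiset.card_add, h1, hcard]
    have hf1 : (R.filter (fun x => ¬ 0 < x)).filter (fun x => x < 0) =
        R.filter (fun x => x < 0) := by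
      rw [Multiset.filter_filter]
      apply Multiset.filter_congr
      intro x _
      exact ⟨fun h => h.1, fun h => ⟨h, by linarith⟩⟩
    have hf2 : (R.filter (fun x => ¬ 0 < x)).filter (fun x => ¬ x < 0) =
        R.filter (fun x => x = 0) := by
      rw [Multiset.filter_filter]
      apply Multiset.filter_congr
      intro x _
      constructor
      · rintro ⟨ha, hb2⟩; linarith [le_antisymm (not_lt.mp hb2) (not_lt.mp ha)]
      · rintro rfl; exact ⟨by norm_num, by norm_num⟩
    have hc2 : (R.filter (fun x => x < 0)).card + (R.filter (fun x => x = 0)).card =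
        (R.filter (fun x => ¬ 0 < x)).card := by
      rw [← hf1, ← hf2, ← Multiset.card_add, h2]
    omega
  -- conclude
  have hVPp : VP p = sc (coeffList p d) := by unfold VP; rw [hdeg]
  have hVPQ : VP Q = sc (coeffList Q d) := by unfold VP; rw [hQdeg]
  have hkled : (R.filter (fun x => x = 0)).card ≤ d := by
    rw [← hk, ← hdeg]
    exact natTrailingDegree_le_natDegree p
  rw [hroots, signChanges_eq_sc]
  omega
end

section
/- For all real θ₁, θ₄, θ₇, let T = T₁(θ₁)·T₂·T₃·T₄(θ₄)·T₅·T₆·T₇(θ₇)·T₈ be the product of the eight 4×4 homogeneous transformation matrices of the EV3 manipulator. Then the (1,4), (2,4) and (3,4) entries of T (the position of the end-effector) are, respectively: x = −112 cos θ₁ cos θ₄ sin θ₇ + 16 cos θ₁ cos θ₄ − 112 cos θ₁ sin θ₄ cos θ₇ − 136 cos θ₁ sin θ₄ + 44√2 cos θ₁; y = −112 sin θ₁ cos θ₄ sin θ₇ + 16 sin θ₁ cos θ₄ − 112 sin θ₁ sin θ₄ cos θ₇ − 136 sin θ₁ sin θ₄ + 44√2 sin θ₁; z = 112 cos θ₄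 cos θ₇ + 136 cos θ₄ − 112 sin θ₄ sin θ₇ + 16 sin θ₄ + 104 + 44√2. -/
open Real Matrix

/-- The Denavit–Hartenberg transformation matrix `⁰T₁(θ₁)` of the EV3 manipulator. -/
noncomputable def T1 (θ1 : ℝ) : Matrix (Fin 4) (Fin 4) ℝ :=
  !![cos θ1, -sin θ1, 0, 0; sin θ1, cos θ1, 0, 0; 0, 0, 1, 80; 0, 0, 0, 1]

/-- The Denavit–Hartenberg transformation matrix `¹T₂` of the EV3 manipulator. -/
noncomputable def T2 : Matrix (Fin 4) (Fin 4) ℝ :=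
  !![Real.sqrt 2 / 2, -(Real.sqrt 2) / 2, 0, 0; 0, 0, -1, 0;
     Real.sqrt 2 / 2, Real.sqrt 2 / 2, 0, 0; 0, 0, 0, 1]

/-- The Denavit–Hartenberg transformation matrix `²T₃` of the EV3 manipulator. -/
noncomputable def T3 : Matrix (Fin 4) (Fin 4) ℝ :=
  !![Real.sqrt 2 / 2, -(Real.sqrt 2) / 2, 0, 88;
     Real.sqrt 2 / 2, Real.sqrt 2 / 2, 0, 0; 0, 0, 1, 0; 0, 0, 0, 1]

/-- The Denavit–Hartenberg transformation matrix `³T₄(θ₄)` of the EV3 manipulator. -/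
noncomputable def T4 (θ4 : ℝ) : Matrix (Fin 4) (Fin 4) ℝ :=
  !![cos θ4, -sin θ4, 0, 24; sin θ4, cos θ4, 0, 0; 0, 0, 1, 0; 0, 0, 0, 1]

/-- The Denavit–Hartenberg transformation matrix `⁴T₅` of the EV3 manipulator. -/
def T5 : Matrix (Fin 4) (Fin 4) ℝ :=
  !![0, 1, 0, 96; -1, 0, 0, 0; 0, 0, 1, 0; 0, 0, 0, 1]

/-- The Denavit–Hartenberg transformation matrix `⁵T₆` of the EV3 manipulator. -/
def T6 : Matrix (Fin 4) (Fin 4) ℝ :=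
  !![0, -1, 0, 16; 1, 0, 0, 0; 0, 0, 1, 0; 0, 0, 0, 1]

/-- The Denavit–Hartenberg transformation matrix `⁶T₇(θ₇)` of the EV3 manipulator. -/
noncomputable def T7 (θ7 : ℝ) : Matrix (Fin 4) (Fin 4) ℝ :=
  !![cos θ7, -sin θ7, 0, 40; sin θ7, cos θ7, 0, 0; 0, 0, 1, 0; 0, 0, 0, 1]

/-- The Denavit–Hartenberg transformation matrix `⁷T₈` of the EV3 manipulator. -/
def T8 : Matrix (Fin 4) (Fin 4) ℝ :=
  !![1, 0, 0, 112; 0, 1, 0, 0; 0, 0, 1, 0; 0, 0, 0, 1]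

noncomputable def E2 (θ1 θ4 θ7 : ℝ) : Matrix (Fin 4) (Fin 4) ℝ :=
  !![(1/2) * Real.sqrt 2 * cos θ1, (-1/2) * Real.sqrt 2 * cos θ1, sin θ1, 0;
     (1/2) * Real.sqrt 2 * sin θ1, (-1/2) * Real.sqrt 2 * sin θ1, (-1) * cos θ1, 0;
     (1/2) * Real.sqrt 2, (1/2) * Real.sqrt 2, 0, 80;
     0, 0, 0, 1]

noncomputable def E3 (θ1 θ4 θ7 : ℝ) : Matrix (Fin 4) (Fin 4) ℝ :=
  !![0, (-1/2) * Real.sqrt 2 * Real.sqrt 2 * cos θ1, sin θ1, 44 * Real.sqrt 2 * cos θ1;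
     0, (-1/2) * Real.sqrt 2 * Real.sqrt 2 * sin θ1, (-1) * cos θ1, 44 * Real.sqrt 2 * sin θ1;
     (1/2) * Real.sqrt 2 * Real.sqrt 2, 0, 0, 80 + 44 * Real.sqrt 2;
     0, 0, 0, 1]

noncomputable def E4 (θ1 θ4 θ7 : ℝ) : Matrix (Fin 4) (Fin 4) ℝ :=
  !![(-1/2) * Real.sqrt 2 * Real.sqrt 2 * cos θ1 * sin θ4, (-1/2) * Real.sqrt 2 * Real.sqrt 2 * cos θ1 * cos θ4, sin θ1, 44 * Real.sqrt 2 * cos θ1;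
     (-1/2) * Real.sqrt 2 * Real.sqrt 2 * sin θ1 * sin θ4, (-1/2) * Real.sqrt 2 * Real.sqrt 2 * sin θ1 * cos θ4, (-1) * cos θ1, 44 * Real.sqrt 2 * sin θ1;
     (1/2) * Real.sqrt 2 * Real.sqrt 2 * cos θ4, (-1/2) * Real.sqrt 2 * Real.sqrt 2 * sin θ4, 0, 80 + 44 * Real.sqrt 2 + 12 * Real.sqrt 2 * Real.sqrt 2;
     0, 0, 0, 1]

noncomputable def E5 (θ1 θ4 θ7 : ℝ) : Matrix (Fin 4) (Fin 4) ℝ :=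
  !![(1/2) * Real.sqrt 2 * Real.sqrt 2 * cos θ1 * cos θ4, (-1/2) * Real.sqrt 2 * Real.sqrt 2 * cos θ1 * sin θ4, sin θ1, 44 * Real.sqrt 2 * cos θ1 + (-48) * Real.sqrt 2 * Real.sqrt 2 * cos θ1 * sin θ4;
     (1/2) * Real.sqrt 2 * Real.sqrt 2 * sin θ1 * cos θ4, (-1/2) * Real.sqrt 2 * Real.sqrt 2 * sin θ1 * sin θ4, (-1) * cos θ1, 44 * Real.sqrt 2 * sin θ1 + (-48) * Real.sqrt 2 * Real.sqrt 2 * sin θ1 * sin θ4;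
     (1/2) * Real.sqrt 2 * Real.sqrt 2 * sin θ4, (1/2) * Real.sqrt 2 * Real.sqrt 2 * cos θ4, 0, 80 + 44 * Real.sqrt 2 + 12 * Real.sqrt 2 * Real.sqrt 2 + 48 * Real.sqrt 2 * Real.sqrt 2 * cos θ4;
     0, 0, 0, 1]

noncomputable def E6 (θ1 θ4 θ7 : ℝ) : Matrix (Fin 4) (Fin 4) ℝ :=
  !![(-1/2) * Real.sqrt 2 * Real.sqrt 2 * cos θ1 * sin θ4, (-1/2) * Real.sqrt 2 * Real.sqrt 2 * cos θ1 * cos θ4, sin θ1, 44 * Real.sqrt 2 * cos θ1 + (-48) * Real.sqrt 2 * Real.sqrt 2 * cos θ1 * sin θ4 + 8 * Real.sqrt 2 * Real.sqrt 2 * cos θ1 * cos θ4;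
     (-1/2) * Real.sqrt 2 * Real.sqrt 2 * sin θ1 * sin θ4, (-1/2) * Real.sqrt 2 * Real.sqrt 2 * sin θ1 * cos θ4, (-1) * cos θ1, 44 * Real.sqrt 2 * sin θ1 + (-48) * Real.sqrt 2 * Real.sqrt 2 * sin θ1 * sin θ4 + 8 * Real.sqrt 2 * Real.sqrt 2 * sin θ1 * cos θ4;
     (1/2) * Real.sqrt 2 * Real.sqrt 2 * cos θ4, (-1/2) * Real.sqrt 2 * Real.sqrt 2 * sin θ4, 0, 80 + 44 * Real.sqrt 2 + 12 * Real.sqrt 2 * Real.sqrt 2 + 8 * Real.sqrt 2 * Real.sqrt 2 * sin θ4 + 48 * Real.sqrt 2 * Real.sqrt 2 * cos θ4;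
     0, 0, 0, 1]

noncomputable def E7 (θ1 θ4 θ7 : ℝ) : Matrix (Fin 4) (Fin 4) ℝ :=
  !![(-1/2) * Real.sqrt 2 * Real.sqrt 2 * cos θ1 * sin θ4 * cos θ7 + (-1/2) * Real.sqrt 2 * Real.sqrt 2 * cos θ1 * cos θ4 * sin θ7, (1/2) * Real.sqrt 2 * Real.sqrt 2 * cos θ1 * sin θ4 * sin θ7 + (-1/2) * Real.sqrt 2 * Real.sqrt 2 * cos θ1 * cos θ4 * cos θ7, sin θ1, 44 * Real.sqrt 2 * cos θ1 + (-68) * Real.sqrt 2 * Real.sqrt 2 * cos θ1 * sin θ4 + 8 * Real.sqrt 2 * Real.sqrt 2 * cos θ1 * cos θ4;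
     (-1/2) * Real.sqrt 2 * Real.sqrt 2 * sin θ1 * sin θ4 * cos θ7 + (-1/2) * Real.sqrt 2 * Real.sqrt 2 * sin θ1 * cos θ4 * sin θ7, (1/2) * Real.sqrt 2 * Real.sqrt 2 * sin θ1 * sin θ4 * sin θ7 + (-1/2) * Real.sqrt 2 * Real.sqrt 2 * sin θ1 * cos θ4 * cos θ7, (-1) * cos θ1, 44 * Real.sqrt 2 * sin θ1 + (-68) * Real.sqrt 2 * Real.sqrt 2 * sin θ1 * sin θ4 + 8 * Real.sqrt 2 * Real.sqrt 2 * sin θ1 * cos θ4;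
     (-1/2) * Real.sqrt 2 * Real.sqrt 2 * sin θ4 * sin θ7 + (1/2) * Real.sqrt 2 * Real.sqrt 2 * cos θ4 * cos θ7, (-1/2) * Real.sqrt 2 * Real.sqrt 2 * sin θ4 * cos θ7 + (-1/2) * Real.sqrt 2 * Real.sqrt 2 * cos θ4 * sin θ7, 0, 80 + 44 * Real.sqrt 2 + 12 * Real.sqrt 2 * Real.sqrt 2 + 8 * Real.sqrt 2 * Real.sqrt 2 * sin θ4 + 68 * Real.sqrt 2 * Real.sqrt 2 * cos θ4;
     0, 0, 0, 1]

noncomputable def E8 (θ1 θ4 θ7 : ℝ) : Matrix (Fin 4) (Fin 4) ℝ :=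
  !![(-1/2) * Real.sqrt 2 * Real.sqrt 2 * cos θ1 * sin θ4 * cos θ7 + (-1/2) * Real.sqrt 2 * Real.sqrt 2 * cos θ1 * cos θ4 * sin θ7, (1/2) * Real.sqrt 2 * Real.sqrt 2 * cos θ1 * sin θ4 * sin θ7 + (-1/2) * Real.sqrt 2 * Real.sqrt 2 * cos θ1 * cos θ4 * cos θ7, sin θ1, 44 * Real.sqrt 2 * cos θ1 + (-68) * Real.sqrt 2 * Real.sqrt 2 * cos θ1 * sin θ4 + (-56) * Real.sqrt 2 * Real.sqrt 2 * cos θ1 * sin θ4 * cos θ7 + 8 * Real.sqrt 2 * Real.sqrt 2 * cos θ1 * cos θ4 + (-56) * Real.sqrt 2 * Real.sqrt 2 * cos θ1 * cos θ4 * sin θ7;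
     (-1/2) * Real.sqrt 2 * Real.sqrt 2 * sin θ1 * sin θ4 * cos θ7 + (-1/2) * Real.sqrt 2 * Real.sqrt 2 * sin θ1 * cos θ4 * sin θ7, (1/2) * Real.sqrt 2 * Real.sqrt 2 * sin θ1 * sin θ4 * sin θ7 + (-1/2) * Real.sqrt 2 * Real.sqrt 2 * sin θ1 * cos θ4 * cos θ7, (-1) * cos θ1, 44 * Real.sqrt 2 * sin θ1 + (-68) * Real.sqrt 2 * Real.sqrt 2 * sin θ1 * sin θ4 + (-56) * Real.sqrt 2 * Real.sqrt 2 * sin θ1 * sin θ4 * cos θ7 + 8 * Real.sqrt 2 * Real.sqrt 2 * sin θ1 * cos θ4 + (-56) * Real.sqrt 2 * Real.sqrt 2 * sin θ1 * cos θ4 * sin θ7;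
     (-1/2) * Real.sqrt 2 * Real.sqrt 2 * sin θ4 * sin θ7 + (1/2) * Real.sqrt 2 * Real.sqrt 2 * cos θ4 * cos θ7, (-1/2) * Real.sqrt 2 * Real.sqrt 2 * sin θ4 * cos θ7 + (-1/2) * Real.sqrt 2 * Real.sqrt 2 * cos θ4 * sin θ7, 0, 80 + 44 * Real.sqrt 2 + 12 * Real.sqrt 2 * Real.sqrt 2 + 8 * Real.sqrt 2 * Real.sqrt 2 * sin θ4 + (-56) * Real.sqrt 2 * Real.sqrt 2 * sin θ4 * sin θ7 + 68 * Real.sqrt 2 * Real.sqrt 2 * cos θ4 + 56 * Real.sqrt 2 * Real.sqrt 2 * cos θ4 * cos θ7;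
     0, 0, 0, 1]


lemma step2 (θ1 θ4 θ7 : ℝ) : T1 θ1 * T2 = E2 θ1 θ4 θ7 := by
  ext i j
  fin_cases i <;> fin_cases j <;>
    simp [T1, T2, E2, Matrix.mul_apply, Fin.sum_univ_four, Matrix.vecHead, Matrix.vecTail] <;> ring

lemma step3 (θ1 θ4 θ7 : ℝ) : T1 θ1 * T2 * T3 = E3 θ1 θ4 θ7 := by
  rw [step2 θ1 θ4 θ7]
  ext i j
  fin_cases i <;> fin_cases j <;>
    simp [T1, T2, T3, T4, T5, T6, T7, T8, E2 , E3, Matrix.mul_apply, Fin.sum_univ_four, Matrix.vecHead, Matrix.vecTail] <;>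
    ring

lemma step4 (θ1 θ4 θ7 : ℝ) : T1 θ1 * T2 * T3 * T4 θ4 = E4 θ1 θ4 θ7 := by
  rw [step3 θ1 θ4 θ7]
  ext i j
  fin_cases i <;> fin_cases j <;>
    simp [T1, T2, T3, T4, T5, T6, T7, T8, E3 , E4, Matrix.mul_apply, Fin.sum_univ_four, Matrix.vecHead, Matrix.vecTail] <;>
    ring

lemma step5 (θ1 θ4 θ7 : ℝ) : T1 θ1 * T2 * T3 * T4 θ4 * T5 = E5 θ1 θ4 θ7 := by
  rw [step4 θ1 θ4 θ7]
  ext i j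
  fin_cases i <;> fin_cases j <;>
    simp [T1, T2, T3, T4, T5, T6, T7, T8, E4 , E5, Matrix.mul_apply, Fin.sum_univ_four, Matrix.vecHead, Matrix.vecTail] <;>
    ring

lemma step6 (θ1 θ4 θ7 : ℝ) : T1 θ1 * T2 * T3 * T4 θ4 * T5 * T6 = E6 θ1 θ4 θ7 := by
  rw [step5 θ1 θ4 θ7]
  ext i j
  fin_cases i <;> fin_cases j <;>
    simp [T1, T2, T3, T4, T5, T6, T7, T8, E5 , E6, Matrix.mul_apply, Fin.sum_univ_four, Matrix.vecHead, Matrix.vecTail] <;>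
    ring

lemma step7 (θ1 θ4 θ7 : ℝ) : T1 θ1 * T2 * T3 * T4 θ4 * T5 * T6 * T7 θ7 = E7 θ1 θ4 θ7 := by
  rw [step6 θ1 θ4 θ7]
  ext i j
  fin_cases i <;> fin_cases j <;>
    simp [T1, T2, T3, T4, T5, T6, T7, T8, E6 , E7, Matrix.mul_apply, Fin.sum_univ_four, Matrix.vecHead, Matrix.vecTail] <;>
    ring

lemma step8 (θ1 θ4 θ7 : ℝ) : T1 θ1 * T2 * T3 * T4 θ4 * T5 * T6 * T7 θ7 * T8 = E8 θ1 θ4 θ7 := by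
  rw [step7 θ1 θ4 θ7]
  ext i j
  fin_cases i <;> fin_cases j <;>
    simp [T1, T2, T3, T4, T5, T6, T7, T8, E7 , E8, Matrix.mul_apply, Fin.sum_univ_four, Matrix.vecHead, Matrix.vecTail] <;>
    ring

/-- **Forward kinematics of the EV3 manipulator.** The (1,4), (2,4), (3,4) entries of
`T = T₁(θ₁)·T₂·T₃·T₄(θ₄)·T₅·T₆·T₇(θ₇)·T₈` give the position `(x, y, z)` of the
end-effector. -/
theorem ev3_forward_kinematics (θ1 θ4 θ7 : ℝ) :
    (T1 θ1 * T2 * T3 * T4 θ4 * T5 * T6 * T7 θ7 * T8) 0 3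
        = -112 * cos θ1 * cos θ4 * sin θ7 + 16 * cos θ1 * cos θ4
          - 112 * cos θ1 * sin θ4 * cos θ7 - 136 * cos θ1 * sin θ4
          + 44 * Real.sqrt 2 * cos θ1 ∧
    (T1 θ1 * T2 * T3 * T4 θ4 * T5 * T6 * T7 θ7 * T8) 1 3
        = -112 * sin θ1 * cos θ4 * sin θ7 + 16 * sin θ1 * cos θ4
          - 112 * sin θ1 * sin θ4 * cos θ7 - 136 * sin θ1 * sin θ4
          + 44 * Real.sqrt 2 * sin θ1 ∧
    (T1 θ1 * T2 * T3 * T4 θ4 * T5 * T6 * T7 θ7 * T8) 2 3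
        = 112 * cos θ4 * cos θ7 + 136 * cos θ4 - 112 * sin θ4 * sin θ7
          + 16 * sin θ4 + 104 + 44 * Real.sqrt 2 := by
  have h : Real.sqrt 2 * Real.sqrt 2 = 2 := Real.mul_self_sqrt (by norm_num)
  rw [step8 θ1 θ4 θ7]
  refine ⟨?_, ?_, ?_⟩
  · show (E8 θ1 θ4 θ7) 0 3 = _
    simp [E8]
    linear_combination (-56 * cos θ1 * sin θ4 * cos θ7 - 56 * cos θ1 * cos θ4 * sin θ7
      + 8 * cos θ1 * cos θ4 - 68 * cos θ1 * sin θ4) * h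
  · show (E8 θ1 θ4 θ7) 1 3 = _
    simp [E8]
    linear_combination (-56 * sin θ1 * sin θ4 * cos θ7 - 56 * sin θ1 * cos θ4 * sin θ7
      + 8 * sin θ1 * cos θ4 - 68 * sin θ1 * sin θ4) * h
  · show (E8 θ1 θ4 θ7) 2 3 = _
    simp [E8]
    linear_combination (56 * cos θ4 * cos θ7 - 56 * sin θ4 * sin θ7
      + 68 * cos θ4 + 8 * sin θ4 + 12) * h
end
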